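/- The subgroup B of the unit group of O_k = ℤ[√ε]/p^kℤ[√ε] consisting of the units whose image in ℤ[√ε]/pℤ[√ε] equals 1 (i.e. units congruent to 1 modulo p) is isomorphic to ℤ/p^{k−1}ℤ × ℤ/p^{k−1}ℤ; in particular it has order p^{2k−2} and contains exactly p^{2k−2} − p^{2k−4} elements of order p^{k−1} when k ≥ 2. -/

import Mathlib

section GeneralRing
variable {A : Type*} [CommRing A] {p : ℕ}

/-- small-power binomial: `c^2 ∣ (1+c)^m - (1 + m c)`. -/
lemma smallpow (c : A) (m : ℕ) : c ^ 2 ∣ (1 + c) ^ m - (1 + (m : A) * c) := by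
  induction m with
  | zero => simp
  | succ m ih =>
    obtain ⟨t, ht⟩ := ih
    refine ⟨(m : A) + t * (1 + c), ?_⟩
    push_cast
    linear_combination (1 + c) * ht

lemma step_dvd (hp : p.Prime) (hodd : Odd p) {i : ℕ} (hi : 1 ≤ i) (y : A) :
    (p : A) ^ (i + 2) ∣ (1 + (p : A) ^ i * y) ^ p - (1 + (p : A) ^ (i + 1) * y) := by
  have hp3 : 3 ≤ p := by
    have h2 := hp.two_le; have ho := Nat.odd_iff.mp hodd; omega
  set z : A := (p : A) ^ i * y with hz
  have hpow : (1 + z) ^ p = ∑ m ∈ Finset.range (p + 1), z ^ m * (p.choose m : A) := by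
    rw [add_comm 1 z, add_pow]; simp
  have hsplit : ∑ m ∈ Finset.range (p + 1), z ^ m * (p.choose m : A)
      = (∑ m ∈ Finset.range (p - 1), z ^ (m + 2) * (p.choose (m + 2) : A))
        + z * p + 1 := by
    rw [Finset.sum_range_succ']
    have : p = (p - 1) + 1 := by omega
    rw [this, Finset.sum_range_succ']
    simp [← this]
    try ring
  rw [hpow, hsplit]
  have : (∑ m ∈ Finset.range (p - 1), z ^ (m + 2) * (p.choose (m + 2) : A)) + z * ↑p + 1
      - (1 + (p : A) ^ (i + 1) * y)
      = ∑ m ∈ Finset.range (p - 1), z ^ (m + 2) * (p.choose (m + 2) : A) := by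
    rw [hz]; ring
  rw [this]
  refine Finset.dvd_sum fun m hm => ?_
  rcases eq_or_lt_of_le (by have := Finset.mem_range.mp hm; omega : m + 2 ≤ p)
    with he | hlt
  · -- m + 2 = p : term is z^p * 1
    have : (p : A) ^ (i * p) ∣ z ^ (m + 2) := by
      rw [he, hz, mul_pow, ← pow_mul]
      exact Dvd.dvd.mul_right dvd_rfl _
    refine Dvd.dvd.mul_right (dvd_trans (pow_dvd_pow _ ?_) this) _
    nlinarith [hi, hp3]
  · -- m + 2 < p : p divides choose
    have hch : (p : A) ∣ (p.choose (m + 2) : A) := by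
      exact_mod_cast Nat.cast_dvd_cast (α := A) (hp.dvd_choose_self (by omega) hlt)
    have hzz : (p : A) ^ (2 * i) ∣ z ^ (m + 2) := by
      calc (p : A) ^ (2 * i) = ((p : A) ^ i) ^ 2 := by rw [← pow_mul, mul_comm]
      _ ∣ z ^ 2 := pow_dvd_pow_of_dvd (Dvd.intro _ rfl) 2
      _ ∣ z ^ (m + 2) := pow_dvd_pow _ (by omega)
    have : (p : A) ^ (2 * i + 1) ∣ z ^ (m + 2) * (p.choose (m + 2) : A) := by
      rw [pow_succ]
      exact mul_dvd_mul hzz hch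
    exact dvd_trans (pow_dvd_pow _ (by omega)) this

/-- Iterated: `(1+py)^(p^j) ≡ 1 + p^(j+1) y  mod p^(j+2)`. -/
lemma iter_dvd (hp : p.Prime) (hodd : Odd p) (j : ℕ) (y : A) :
    (p : A) ^ (j + 2) ∣ (1 + (p : A) * y) ^ (p ^ j) - (1 + (p : A) ^ (j + 1) * y) := by
  induction j with
  | zero => simp
  | succ j ih =>
    obtain ⟨s, hs⟩ := ih
    have hA : (1 + (p : A) * y) ^ (p ^ j) = 1 + (p : A) ^ (j + 1) * (y + (p : A) * s) := by
      have := sub_eq_iff_eq_add.mp hs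
      rw [this]; ring
    have hstep := step_dvd hp hodd (i := j + 1) (by omega) (y + (p : A) * s)
    obtain ⟨t, ht⟩ := hstep
    refine ⟨t + s, ?_⟩
    have : (1 + (p : A) * y) ^ (p ^ (j + 1)) = ((1 + (p : A) * y) ^ (p ^ j)) ^ p := by
      rw [← pow_mul, pow_succ]
    rw [this, hA]
    have hee : j + 1 + 2 = j + 2 + 1 := by omega
    rw [hee] at ht
    linear_combination ht

end GeneralRing

section Derived
variable {A : Type*} [CommRing A] {p : ℕ}

lemma one_mod_dvd (hp : p.Prime) (hodd : Odd p) (j : ℕ) (x : A) :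
    (p : A) ^ (j + 1) ∣ (1 + (p : A) * x) ^ (p ^ j) - 1 := by
  obtain ⟨s, hs⟩ := iter_dvd hp hodd j x
  exact ⟨x + (p : A) * s, by linear_combination hs⟩

lemma onepow_dvd (hp : p.Prime) (hodd : Odd p) (j a : ℕ) (x : A) :
    (p : A) ^ (j + 2) ∣ (1 + (p : A) * x) ^ (p ^ j * a) - (1 + (a : A) * (p : A) ^ (j + 1) * x) := by
  obtain ⟨s, hs⟩ := iter_dvd hp hodd j x
  have h1 : (1 + (p : A) * x) ^ (p ^ j) = 1 + (p : A) ^ (j + 1) * (x + (p : A) * s) := by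
    have h2 := sub_eq_iff_eq_add.mp hs
    rw [h2]; ring
  obtain ⟨t, ht⟩ := smallpow ((p : A) ^ (j + 1) * (x + (p : A) * s)) a
  rw [pow_mul, h1]
  exact ⟨(a : A) * s + (p : A) ^ j * (x + (p : A) * s) ^ 2 * t, by linear_combination ht⟩

lemma keycomp_dvd (hp : p.Prime) (hodd : Odd p) (j a b : ℕ) (x y : A) :
    (p : A) ^ (j + 2) ∣ (1 + (p : A) * x) ^ (p ^ j * a) * (1 + (p : A) * y) ^ (p ^ j * b)
      - (1 + (p : A) ^ (j + 1) * ((a : A) * x + (b : A) * y)) := by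
  obtain ⟨α, hα⟩ := onepow_dvd hp hodd j a x
  obtain ⟨β, hβ⟩ := onepow_dvd hp hodd j b y
  set X := (1 + (p : A) * x) ^ (p ^ j * a)
  set Y := (1 + (p : A) * y) ^ (p ^ j * b)
  set U := 1 + (a : A) * (p : A) ^ (j + 1) * x
  set V := 1 + (b : A) * (p : A) ^ (j + 1) * y
  have d1 : (p : A) ^ (j + 2) ∣ X * Y - U * V := by
    have h : X * Y - U * V = X * (Y - V) + V * (X - U) := by ring
    rw [h]
    exact dvd_add (Dvd.dvd.mul_left ⟨β, hβ⟩ _) (Dvd.dvd.mul_left ⟨α, hα⟩ _)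
  have d2 : (p : A) ^ (j + 2) ∣ U * V - (1 + (p : A) ^ (j + 1) * ((a : A) * x + (b : A) * y)) :=
    ⟨(a : A) * (b : A) * (p : A) ^ j * x * y, by simp only [U, V]; ring⟩
  have h3 := dvd_add d1 d2
  rwa [sub_add_sub_cancel] at h3

end Derived

section Hom
variable {G : Type*} [CommGroup G]

/-- The homomorphism `Multiplicative (ZMod n) →* G` sending `1` to `g`, when `g ^ n = 1`. -/
noncomputable def zmodPowHom (n : ℕ) (g : G) (h : g ^ n = 1) : Multiplicative (ZMod n) →* G :=
  AddMonoidHom.toMultiplicativeLeft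
    (ZMod.lift n ⟨(zmultiplesHom (Additive G)) (Additive.ofMul g), by
      simp only [zmultiplesHom_apply]
      rw [← ofMul_zpow]
      simp [h]⟩)

lemma zmodPowHom_apply (n : ℕ) (g : G) (h : g ^ n = 1) (m : ℕ) :
    zmodPowHom n g h (Multiplicative.ofAdd ((m : ZMod n))) = g ^ m := by
  unfold zmodPowHom
  rw [AddMonoidHom.coe_toMultiplicativeLeft, Function.comp_apply, Function.comp_apply]
  simp only [Equiv.coe_fn_mk, MonoidHom.coe_mk, OneHom.coe_mk, toAdd_ofAdd]
  have hc : ((m : ZMod n)) = (((m : ℤ) : ZMod n)) := by push_cast; rfl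
  rw [hc, ZMod.lift_coe]
  simp [zmultiplesHom_apply, ← ofMul_zpow]

lemma mult_zmod_exp (n : ℕ) (y : Multiplicative (ZMod n)) : y ^ n = 1 := by
  have : (y ^ n).toAdd = 0 := by
    rw [toAdd_pow]
    simp [nsmul_eq_mul, ZMod.natCast_self]
  rwa [toAdd_eq_zero] at this

end Hom

section Torsion
variable {p : ℕ}

lemma zmod_torsion_card (hp : p.Prime) (m : ℕ) :
    Nat.card {a : ZMod (p ^ (m + 1)) | p ^ m • a = 0} = p ^ m := by
  haveI : NeZero (p ^ (m + 1)) := ⟨pow_ne_zero _ hp.pos.ne'⟩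
  haveI : NeZero (p ^ m) := ⟨pow_ne_zero _ hp.pos.ne'⟩
  have key : ∀ a : ZMod (p ^ (m + 1)), p ^ m • a = 0 ↔ p ∣ a.val := by
    intro a
    have h1 : p ^ m • a = ((p ^ m * a.val : ℕ) : ZMod (p ^ (m + 1))) := by
      rw [Nat.cast_mul, ZMod.natCast_rightInverse a, nsmul_eq_mul]
    rw [h1, ZMod.natCast_eq_zero_iff]
    constructor
    · intro hd
      have hd2 : p ^ m * p ∣ p ^ m * a.val := by rwa [← pow_succ]
      exact (Nat.mul_dvd_mul_iff_left (pow_pos hp.pos m)).mp hd2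
    · rintro ⟨c, hc⟩
      exact ⟨c, by rw [hc, pow_succ]; ring⟩
  have hlt' : ∀ c : ZMod (p ^ m), p * c.val < p ^ (m + 1) := by
    intro c
    calc p * c.val < p * p ^ m := (mul_lt_mul_iff_right₀ hp.pos).mpr (ZMod.val_lt c)
    _ = p ^ (m + 1) := (pow_succ' p m).symm
  have e : ZMod (p ^ m) ≃ {a : ZMod (p ^ (m + 1)) | p ^ m • a = 0} := by
    refine Equiv.ofBijective
      (fun c => ⟨((p * c.val : ℕ) : ZMod (p ^ (m + 1))), ?_⟩) ⟨?_, ?_⟩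
    · rw [Set.mem_setOf_eq, key, ZMod.val_cast_of_lt (hlt' c)]
      exact dvd_mul_right _ _
    · intro c c' hcc
      have h2 : ((p * c.val : ℕ) : ZMod (p ^ (m + 1))) = ((p * c'.val : ℕ) : ZMod (p ^ (m + 1))) := by
        simpa using congrArg Subtype.val hcc
      have h3 : p * c.val ≡ p * c'.val [MOD p ^ (m + 1)] := (ZMod.natCast_eq_natCast_iff _ _ _).mp h2
      rw [pow_succ'] at h3
      have h4 : c.val ≡ c'.val [MOD p ^ m] := Nat.ModEq.mul_left_cancel' hp.pos.ne' h3
      have h5 := (ZMod.natCast_eq_natCast_iff _ _ _).mpr h4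
      rwa [ZMod.natCast_rightInverse c, ZMod.natCast_rightInverse c'] at h5
    · rintro ⟨a, ha⟩
      rw [Set.mem_setOf_eq, key] at ha
      obtain ⟨c0, hc0⟩ := ha
      have hlt : c0 < p ^ m := by
        have hv := ZMod.val_lt a
        rw [hc0, pow_succ'] at hv
        exact Nat.lt_of_mul_lt_mul_left hv
      refine ⟨(c0 : ZMod (p ^ m)), Subtype.ext ?_⟩
      show ((p * ((c0 : ZMod (p ^ m)).val) : ℕ) : ZMod (p ^ (m + 1))) = a
      rw [ZMod.val_cast_of_lt hlt, ← hc0, ZMod.natCast_rightInverse a]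
  rw [← Nat.card_congr e, Nat.card_zmod]

end Torsion

section CountOrd
variable {p : ℕ}

lemma count_ord (hp : p.Prime) (m : ℕ) :
    Nat.card {y : Multiplicative (ZMod (p ^ (m + 1))) × Multiplicative (ZMod (p ^ (m + 1))) |
      orderOf y = p ^ (m + 1)} = p ^ (m + 1) * p ^ (m + 1) - p ^ m * p ^ m := by
  classical
  haveI : NeZero (p ^ (m + 1)) := ⟨pow_ne_zero _ hp.pos.ne'⟩
  set N := p ^ (m + 1) with hN
  have hDexp : ∀ y : Multiplicative (ZMod N) × Multiplicative (ZMod N), y ^ N = 1 := by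
    intro y
    have h1 : (y ^ N).1 = (1 : Multiplicative (ZMod N) × Multiplicative (ZMod N)).1 := by
      rw [Prod.pow_fst]; exact mult_zmod_exp N y.1
    have h2 : (y ^ N).2 = (1 : Multiplicative (ZMod N) × Multiplicative (ZMod N)).2 := by
      rw [Prod.pow_snd]; exact mult_zmod_exp N y.2
    exact Prod.ext h1 h2
  have hchar : ∀ y : Multiplicative (ZMod N) × Multiplicative (ZMod N),
      orderOf y = N ↔ ¬ (y ^ (p ^ m) = 1) := by
    intro y
    constructor
    · intro h hMd
      have hdd := orderOf_dvd_of_pow_eq_one hMd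
      rw [h] at hdd
      have hle := Nat.le_of_dvd (pow_pos hp.pos m) hdd
      have hlt : p ^ m < p ^ (m + 1) := Nat.pow_lt_pow_right hp.one_lt (by omega)
      omega
    · intro h
      obtain ⟨e', he'le, he'⟩ := (Nat.dvd_prime_pow hp).mp
        (orderOf_dvd_of_pow_eq_one (hDexp y))
      by_contra hne
      have he'm : e' ≤ m := by
        rcases Nat.lt_or_ge e' (m + 1) with h' | h'
        · omega
        · exact absurd (by rw [he']; congr 1; omega) hne
      exact h (orderOf_dvd_iff_pow_eq_one.mp (he' ▸ pow_dvd_pow p he'm))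
  have hset : {y : Multiplicative (ZMod N) × Multiplicative (ZMod N) | orderOf y = N}
      = {y : Multiplicative (ZMod N) × Multiplicative (ZMod N) | ¬ (y ^ (p ^ m) = 1)} :=
    Set.ext fun y => hchar y
  -- card of the p^m-torsion
  have hfac : Nat.card {y₁ : Multiplicative (ZMod N) // y₁ ^ (p ^ m) = 1} = p ^ m := by
    have e3 : {y₁ : Multiplicative (ZMod N) // y₁ ^ (p ^ m) = 1}
        ≃ {a : ZMod N | p ^ m • a = 0} :=
      Equiv.subtypeEquiv Multiplicative.toAdd (fun y₁ => by
        rw [Set.mem_setOf_eq, ← toAdd_pow, toAdd_eq_zero])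
    rw [Nat.card_congr e3, hN, zmod_torsion_card hp m]
  have hQ : Nat.card {y : Multiplicative (ZMod N) × Multiplicative (ZMod N) |
      y ^ (p ^ m) = 1} = p ^ m * p ^ m := by
    have e1 : {y : Multiplicative (ZMod N) × Multiplicative (ZMod N) | y ^ (p ^ m) = 1}
        ≃ {y : Multiplicative (ZMod N) × Multiplicative (ZMod N) //
            y.1 ^ (p ^ m) = 1 ∧ y.2 ^ (p ^ m) = 1} :=
      Equiv.subtypeEquivRight (fun y => by
        simp only [Set.mem_setOf_eq, Prod.ext_iff, Prod.pow_fst, Prod.pow_snd,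
          Prod.fst_one, Prod.snd_one])
    rw [Nat.card_congr (e1.trans (Equiv.subtypeProdEquivProd
      (p := fun y₁ : Multiplicative (ZMod N) => y₁ ^ p ^ m = 1)
      (q := fun y₂ : Multiplicative (ZMod N) => y₂ ^ p ^ m = 1))), Nat.card_prod, hfac]
  have htot : Nat.card (Multiplicative (ZMod N) × Multiplicative (ZMod N)) = N * N := by
    rw [Nat.card_prod, Nat.card_congr (Multiplicative.toAdd), Nat.card_zmod]
  rw [hset]
  haveI : Fintype (Multiplicative (ZMod N) × Multiplicative (ZMod N)) :=
    Fintype.ofFinite _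
  rw [Nat.card_eq_fintype_card] at htot hQ ⊢
  have hcompl := Fintype.card_subtype_compl
    (fun y : Multiplicative (ZMod N) × Multiplicative (ZMod N) => y ^ (p ^ m) = 1)
  have b1 : Fintype.card ↥{y : Multiplicative (ZMod N) × Multiplicative (ZMod N) | ¬ y ^ p ^ m = 1}
      = Fintype.card {y : Multiplicative (ZMod N) × Multiplicative (ZMod N) // ¬ y ^ p ^ m = 1} :=
    Fintype.card_congr (Equiv.refl _)
  have b2 : Fintype.card {y : Multiplicative (ZMod N) × Multiplicative (ZMod N) // y ^ p ^ m = 1}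
      = Fintype.card ↥{y : Multiplicative (ZMod N) × Multiplicative (ZMod N) | y ^ p ^ m = 1} :=
    Fintype.card_congr (Equiv.refl _)
  rw [b1, hcompl, htot, b2, hQ]

end CountOrd

section ZsqrtdAux

lemma zsqrtd_pow_dvd (ε : ℤ) (p m : ℕ) (z : Zsqrtd ε) :
    (p : Zsqrtd ε) ^ m ∣ z ↔ ((p : ℤ) ^ m ∣ z.re ∧ (p : ℤ) ^ m ∣ z.im) := by
  have h : ((p : Zsqrtd ε)) ^ m = (((p : ℤ) ^ m : ℤ) : Zsqrtd ε) := by push_cast; ring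
  rw [h, Zsqrtd.intCast_dvd]

lemma int_pow_cancel {p : ℕ} (hp : 0 < p) (m : ℕ) {a : ℤ} 
    (h : (p : ℤ) ^ (m + 1) ∣ (p : ℤ) * a) : (p : ℤ) ^ m ∣ a := by
  have hm : (p : ℤ) ^ (m + 1) = (p : ℤ) * (p : ℤ) ^ m := by rw [pow_succ']
  rw [hm] at h
  exact (mul_dvd_mul_iff_left (show (p:ℤ) ≠ 0 by exact_mod_cast hp.ne')).mp h

lemma zsqrtd_cancel (ε : ℤ) {p : ℕ} (hp : 0 < p) (m : ℕ) (z : Zsqrtd ε)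
    (h : (p : Zsqrtd ε) ^ (m + 1) ∣ (p : Zsqrtd ε) * z) :
    (p : ℤ) ^ m ∣ z.re ∧ (p : ℤ) ^ m ∣ z.im := by
  have hc : (p : Zsqrtd ε) * z = ((p : ℤ) : Zsqrtd ε) * z := by norm_cast
  rw [hc, zsqrtd_pow_dvd, Zsqrtd.re_smul, Zsqrtd.im_smul] at h
  exact ⟨int_pow_cancel hp m h.1, int_pow_cancel hp m h.2⟩

lemma zsqrtd_mul_dvd (ε : ℤ) (p m : ℕ) (z : Zsqrtd ε)
    (h1 : (p : ℤ) ^ m ∣ z.re) (h2 : (p : ℤ) ^ m ∣ z.im) :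
    (p : Zsqrtd ε) ^ (m + 1) ∣ (p : Zsqrtd ε) * z := by
  rw [pow_succ']
  exact mul_dvd_mul_left _ ((zsqrtd_pow_dvd ε p m z).mpr ⟨h1, h2⟩)

end ZsqrtdAux

lemma zsqrtd_cancel' (ε : ℤ) {p : ℕ} (hp : 0 < p) (m : ℕ) (z : Zsqrtd ε)
    (h : (p : Zsqrtd ε) ^ (m + 1) ∣ (p : Zsqrtd ε) ^ m * z) :
    (p : ℤ) ∣ z.re ∧ (p : ℤ) ∣ z.im := by
  have hc : (p : Zsqrtd ε) ^ m * z = (((p : ℤ) ^ m : ℤ) : Zsqrtd ε) * z := by push_cast; ring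
  rw [hc, zsqrtd_pow_dvd, Zsqrtd.re_smul, Zsqrtd.im_smul] at h
  have hpm : ((p : ℤ) ^ m) ≠ 0 := pow_ne_zero _ (by exact_mod_cast hp.ne')
  obtain ⟨h1, h2⟩ := h
  rw [pow_succ] at h1 h2
  exact ⟨(mul_dvd_mul_iff_left hpm).mp h1, (mul_dvd_mul_iff_left hpm).mp h2⟩

/-- The reduction-mod-`p` ring homomorphism `ℤ[√ε]/p^kℤ[√ε] →+* ℤ[√ε]/pℤ[√ε]`. -/
noncomputable def redModP (ε : ℤ) (p k : ℕ) (hk : 1 ≤ k) :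
    (Zsqrtd ε ⧸ Ideal.span {(p : Zsqrtd ε) ^ k}) →+* (Zsqrtd ε ⧸ Ideal.span {(p : Zsqrtd ε)}) :=
  Ideal.Quotient.factor
    (Ideal.span_singleton_le_span_singleton.mpr (dvd_pow_self _ (by omega)))

/-- The subgroup `B` of units of `O_k = ℤ[√ε]/p^kℤ[√ε]` congruent to `1` mod `p`, i.e. the
kernel of the reduction map to the units of `ℤ[√ε]/pℤ[√ε]`. -/
noncomputable def unitsOneModP (ε : ℤ) (p k : ℕ) (hk : 1 ≤ k) :
    Subgroup (Zsqrtd ε ⧸ Ideal.span {(p : Zsqrtd ε) ^ k})ˣ :=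
  MonoidHom.ker (Units.map (redModP ε p k hk).toMonoidHom)

/-- `B` is isomorphic to `ℤ/p^(k-1)ℤ × ℤ/p^(k-1)ℤ`; in particular it has order `p^(2k-2)`,
and for `k ≥ 2` it has exactly `p^(2k-2) - p^(2k-4)` elements of order `p^(k-1)`. -/
theorem unitsOneModP_structure (p k : ℕ) (hp : p.Prime) (hodd : Odd p) (hk : 1 ≤ k)
    (ε : ℤ) (hε : ¬ IsSquare (ε : ZMod p)) :
    Nonempty ((unitsOneModP ε p k hk) ≃*
        Multiplicative (ZMod (p ^ (k - 1))) × Multiplicative (ZMod (p ^ (k - 1)))) ∧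
    Nat.card (unitsOneModP ε p k hk) = p ^ (2 * k - 2) ∧
    (2 ≤ k →
      Nat.card {x : unitsOneModP ε p k hk | orderOf x = p ^ (k - 1)}
        = p ^ (2 * k - 2) - p ^ (2 * k - 4)) := by
  classical
  haveI hNnz : NeZero (p ^ (k - 1)) := ⟨pow_ne_zero _ hp.pos.ne'⟩
  set N := p ^ (k - 1) with hNdef
  have hkk : k - 1 + 1 = k := by omega
  -- quotient equality
  have hmk_eq : ∀ x y : Zsqrtd ε,
      Ideal.Quotient.mk (Ideal.span {(p : Zsqrtd ε) ^ k}) x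
        = Ideal.Quotient.mk (Ideal.span {(p : Zsqrtd ε) ^ k}) y
      ↔ (p : Zsqrtd ε) ^ k ∣ x - y := by
    intro x y
    rw [Ideal.Quotient.eq, Ideal.mem_span_singleton]
  have hred : ∀ x : Zsqrtd ε,
      redModP ε p k hk (Ideal.Quotient.mk (Ideal.span {(p : Zsqrtd ε) ^ k}) x)
        = Ideal.Quotient.mk (Ideal.span {(p : Zsqrtd ε)}) x :=
    fun x => Ideal.Quotient.factor_mk _ x
  have hred1 : ∀ x : Zsqrtd ε,
      (redModP ε p k hk (Ideal.Quotient.mk (Ideal.span {(p : Zsqrtd ε) ^ k}) x) = 1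
        ↔ (p : Zsqrtd ε) ∣ x - 1) := by
    intro x
    rw [hred x, show (1 : Zsqrtd ε ⧸ Ideal.span {(p : Zsqrtd ε)})
        = Ideal.Quotient.mk (Ideal.span {(p : Zsqrtd ε)}) 1 from (map_one _).symm,
      Ideal.Quotient.eq, Ideal.mem_span_singleton]
  have hunit : ∀ x : Zsqrtd ε, (p : Zsqrtd ε) ∣ x - 1 →
      IsUnit (Ideal.Quotient.mk (Ideal.span {(p : Zsqrtd ε) ^ k}) x) := by
    rintro x ⟨y, hy⟩
    have hnil : IsNilpotent (Ideal.Quotient.mk (Ideal.span {(p : Zsqrtd ε) ^ k})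
        ((p : Zsqrtd ε) * y)) := by
      refine ⟨k, ?_⟩
      rw [← map_pow, Ideal.Quotient.eq_zero_iff_mem, Ideal.mem_span_singleton, mul_pow]
      exact Dvd.dvd.mul_right dvd_rfl _
    have h2 : Ideal.Quotient.mk (Ideal.span {(p : Zsqrtd ε) ^ k}) x
        = 1 + Ideal.Quotient.mk (Ideal.span {(p : Zsqrtd ε) ^ k}) ((p : Zsqrtd ε) * y) := by
      rw [show x = 1 + (p : Zsqrtd ε) * y from by rw [← hy]; ring, RingHom.map_add, RingHom.map_one]
    rw [h2]
    exact hnil.isUnit_one_add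
  have hmem : ∀ U : (Zsqrtd ε ⧸ Ideal.span {(p : Zsqrtd ε) ^ k})ˣ,
      U ∈ unitsOneModP ε p k hk ↔ redModP ε p k hk ↑U = 1 := by
    intro U
    rw [unitsOneModP, MonoidHom.mem_ker, Units.ext_iff]
    simp
  have hdvd1 : ∀ c : Zsqrtd ε, (p : Zsqrtd ε) ∣ (1 + (p : Zsqrtd ε) * c) - 1 :=
    fun c => ⟨c, by ring⟩
  set Uof : Zsqrtd ε → (Zsqrtd ε ⧸ Ideal.span {(p : Zsqrtd ε) ^ k})ˣ :=
    fun c => (hunit _ (hdvd1 c)).unit with hUofdef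
  have hUof : ∀ c : Zsqrtd ε, (Uof c : Zsqrtd ε ⧸ Ideal.span {(p : Zsqrtd ε) ^ k})
      = Ideal.Quotient.mk (Ideal.span {(p : Zsqrtd ε) ^ k}) (1 + (p : Zsqrtd ε) * c) :=
    fun c => IsUnit.unit_spec _
  have hUofB : ∀ c : Zsqrtd ε, Uof c ∈ unitsOneModP ε p k hk := by
    intro c
    rw [hmem, hUof c, hred1]
    exact hdvd1 c
  have hpowval : ∀ (c : Zsqrtd ε) (n : ℕ),
      ((((⟨Uof c, hUofB c⟩ : unitsOneModP ε p k hk) ^ n :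
          unitsOneModP ε p k hk) : (Zsqrtd ε ⧸ Ideal.span {(p : Zsqrtd ε) ^ k})ˣ) :
          Zsqrtd ε ⧸ Ideal.span {(p : Zsqrtd ε) ^ k})
        = Ideal.Quotient.mk (Ideal.span {(p : Zsqrtd ε) ^ k}) ((1 + (p : Zsqrtd ε) * c) ^ n) := by
    intro c n
    rw [SubgroupClass.coe_pow, Units.val_pow_eq_pow_val, hUof, map_pow]
  have hord : ∀ c : Zsqrtd ε, (⟨Uof c, hUofB c⟩ : unitsOneModP ε p k hk) ^ N = 1 := by
    intro c
    refine Subtype.ext (Units.ext ?_)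
    rw [hpowval c N]
    show _ = (1 : Zsqrtd ε ⧸ Ideal.span {(p : Zsqrtd ε) ^ k})
    rw [show (1 : Zsqrtd ε ⧸ Ideal.span {(p : Zsqrtd ε) ^ k})
        = Ideal.Quotient.mk (Ideal.span {(p : Zsqrtd ε) ^ k}) 1 from (map_one _).symm]
    rw [hmk_eq]
    have := one_mod_dvd (A := Zsqrtd ε) hp hodd (k - 1) c
    rwa [hkk] at this
  set φ : Multiplicative (ZMod N) × Multiplicative (ZMod N) →* unitsOneModP ε p k hk :=
    MonoidHom.coprod (zmodPowHom N ⟨Uof 1, hUofB 1⟩ (hord 1))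
      (zmodPowHom N ⟨Uof Zsqrtd.sqrtd, hUofB Zsqrtd.sqrtd⟩ (hord Zsqrtd.sqrtd)) with hφdef
  have hval : ∀ a : ZMod N, ((a.val : ℕ) : ZMod N) = a := fun a => ZMod.natCast_rightInverse a
  have hφap : ∀ m m' : ℕ,
      φ (Multiplicative.ofAdd ((m : ZMod N)), Multiplicative.ofAdd ((m' : ZMod N)))
        = (⟨Uof 1, hUofB 1⟩ : unitsOneModP ε p k hk) ^ m
          * (⟨Uof Zsqrtd.sqrtd, hUofB Zsqrtd.sqrtd⟩ : unitsOneModP ε p k hk) ^ m' := by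
    intro m m'
    rw [hφdef, MonoidHom.coprod_apply, zmodPowHom_apply, zmodPowHom_apply]
  have hinj : Function.Injective φ := by
    rw [injective_iff_map_eq_one]
    rcases eq_or_lt_of_le hk with hk1 | hk2
    · intro a _
      haveI : Subsingleton (ZMod N) := by
        rw [hNdef, show k - 1 = 0 by omega, pow_zero]
        infer_instance
      exact Subsingleton.elim _ _
    · intro z hz
      by_contra hzne
      have hzN : z ^ N = 1 := by
        refine Prod.ext ?_ ?_
        · rw [Prod.pow_fst]; exact mult_zmod_exp N z.1
        · rw [Prod.pow_snd]; exact mult_zmod_exp N z.2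
      obtain ⟨e', he'le, he'⟩ := (Nat.dvd_prime_pow hp).mp (orderOf_dvd_of_pow_eq_one hzN)
      have he1 : 1 ≤ e' := by
        rcases Nat.eq_zero_or_pos e' with h0 | h
        · exfalso; apply hzne
          rw [← orderOf_eq_one_iff, he', h0, pow_zero]
        · exact h
      set w := z ^ (p ^ (e' - 1)) with hwdef
      have hwne : w ≠ 1 := by
        intro h1
        have hdd := orderOf_dvd_of_pow_eq_one h1
        rw [he'] at hdd
        have hle := Nat.le_of_dvd (pow_pos hp.pos _) hdd
        have hlt : p ^ (e' - 1) < p ^ e' := Nat.pow_lt_pow_right hp.one_lt (by omega)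
        omega
      have hwp : w ^ p = 1 := by
        rw [hwdef, ← pow_mul, ← pow_succ, show e' - 1 + 1 = e' by omega, ← he',
          pow_orderOf_eq_one]
      have hwker : φ w = 1 := by rw [hwdef, map_pow, hz, one_pow]
      have hsmul : ∀ a : ZMod N, p • a = 0 → p ^ (k - 2) ∣ a.val := by
        intro a ha
        have h1 : ((p * a.val : ℕ) : ZMod N) = 0 := by
          rw [Nat.cast_mul, hval a, ← nsmul_eq_mul, ha]
        have h2 : N ∣ p * a.val := (ZMod.natCast_eq_zero_iff _ _).mp h1
        have hxy : p * p ^ (k - 2) = N := by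
          rw [hNdef, ← pow_succ']; congr 1; omega
        exact (Nat.mul_dvd_mul_iff_left hp.pos).mp (dvd_trans (dvd_of_eq hxy) h2)
      have hw1p : p • (w.1.toAdd) = 0 := by
        have h3 := congrArg (fun y : Multiplicative (ZMod N) × Multiplicative (ZMod N)
          => Multiplicative.toAdd y.1) hwp
        simpa [Prod.pow_fst, toAdd_pow] using h3
      have hw2p : p • (w.2.toAdd) = 0 := by
        have h3 := congrArg (fun y : Multiplicative (ZMod N) × Multiplicative (ZMod N)
          => Multiplicative.toAdd y.2) hwp
        simpa [Prod.pow_snd, toAdd_pow] using h3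
      obtain ⟨a₁, ha₁⟩ := hsmul _ hw1p
      obtain ⟨b₁, hb₁⟩ := hsmul _ hw2p
      have hNsplit : N = p ^ (k - 2) * p := by
        rw [hNdef, ← pow_succ]; congr 1; omega
      have ha₁lt : a₁ < p := by
        have hv := lt_of_lt_of_eq (ZMod.val_lt (w.1.toAdd)) hNsplit
        rw [ha₁] at hv
        exact lt_of_mul_lt_mul_left hv (Nat.zero_le _)
      have hb₁lt : b₁ < p := by
        have hv := lt_of_lt_of_eq (ZMod.val_lt (w.2.toAdd)) hNsplit
        rw [hb₁] at hv
        exact lt_of_mul_lt_mul_left hv (Nat.zero_le _)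
      have hwform : w = (Multiplicative.ofAdd (((w.1.toAdd).val : ℕ) : ZMod N),
          Multiplicative.ofAdd (((w.2.toAdd).val : ℕ) : ZMod N)) := by
        rw [hval, hval, ofAdd_toAdd, ofAdd_toAdd]
      have hwval : (⟨Uof 1, hUofB 1⟩ : unitsOneModP ε p k hk) ^ ((w.1.toAdd).val)
          * (⟨Uof Zsqrtd.sqrtd, hUofB Zsqrtd.sqrtd⟩ : unitsOneModP ε p k hk)
            ^ ((w.2.toAdd).val) = 1 := by
        rw [← hφap, ← hwform, hwker]
      have hq : Ideal.Quotient.mk (Ideal.span {(p : Zsqrtd ε) ^ k})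
          ((1 + (p : Zsqrtd ε) * 1) ^ ((w.1.toAdd).val)
            * (1 + (p : Zsqrtd ε) * Zsqrtd.sqrtd) ^ ((w.2.toAdd).val))
          = Ideal.Quotient.mk (Ideal.span {(p : Zsqrtd ε) ^ k}) 1 := by
        have hcoe := congrArg
          (fun b : unitsOneModP ε p k hk =>
            ((b : (Zsqrtd ε ⧸ Ideal.span {(p : Zsqrtd ε) ^ k})ˣ) :
              Zsqrtd ε ⧸ Ideal.span {(p : Zsqrtd ε) ^ k})) hwval
        rw [RingHom.map_mul, RingHom.map_one]
        rw [← hpowval 1 ((w.1.toAdd).val), ← hpowval Zsqrtd.sqrtd ((w.2.toAdd).val)]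
        simpa using hcoe
      rw [hmk_eq] at hq
      have hkey := keycomp_dvd (A := Zsqrtd ε) hp hodd (k - 2) a₁ b₁ 1 Zsqrtd.sqrtd
      rw [show k - 2 + 2 = k by omega, show k - 2 + 1 = k - 1 by omega, ← ha₁, ← hb₁] at hkey
      have hfin : (p : Zsqrtd ε) ^ k ∣
          (p : Zsqrtd ε) ^ (k - 1) * ((a₁ : Zsqrtd ε) * 1 + (b₁ : Zsqrtd ε) * Zsqrtd.sqrtd) := by
        have h4 := dvd_sub hq hkey
        have heq : (1 + (p : Zsqrtd ε) * 1) ^ ((w.1.toAdd).val)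
            * (1 + (p : Zsqrtd ε) * Zsqrtd.sqrtd) ^ ((w.2.toAdd).val) - 1
            - ((1 + (p : Zsqrtd ε) * 1) ^ ((w.1.toAdd).val)
              * (1 + (p : Zsqrtd ε) * Zsqrtd.sqrtd) ^ ((w.2.toAdd).val)
              - (1 + (p : Zsqrtd ε) ^ (k - 1)
                * ((a₁ : Zsqrtd ε) * 1 + (b₁ : Zsqrtd ε) * Zsqrtd.sqrtd)))
            = (p : Zsqrtd ε) ^ (k - 1)
              * ((a₁ : Zsqrtd ε) * 1 + (b₁ : Zsqrtd ε) * Zsqrtd.sqrtd) := by ring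
        rwa [heq] at h4
      rw [← hkk] at hfin
      have hzc := zsqrtd_cancel' ε hp.pos (k - 1) _ hfin
      have hre : ((a₁ : Zsqrtd ε) * 1 + (b₁ : Zsqrtd ε) * Zsqrtd.sqrtd).re = (a₁ : ℤ) := by
        simp
      have him : ((a₁ : Zsqrtd ε) * 1 + (b₁ : Zsqrtd ε) * Zsqrtd.sqrtd).im = (b₁ : ℤ) := by
        simp
      rw [hre, him] at hzc
      have ha0 : a₁ = 0 := Nat.eq_zero_of_dvd_of_lt (Int.natCast_dvd_natCast.mp hzc.1) ha₁lt
      have hb0 : b₁ = 0 := Nat.eq_zero_of_dvd_of_lt (Int.natCast_dvd_natCast.mp hzc.2) hb₁lt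
      have hw1 : w.1 = 1 := by
        have hv0 : (w.1.toAdd).val = 0 := by rw [ha₁, ha0, mul_zero]
        exact toAdd_eq_zero.mp ((ZMod.val_eq_zero _).mp hv0)
      have hw2 : w.2 = 1 := by
        have hv0 : (w.2.toAdd).val = 0 := by rw [hb₁, hb0, mul_zero]
        exact toAdd_eq_zero.mp ((ZMod.val_eq_zero _).mp hv0)
      exact hwne (Prod.ext hw1 hw2)
  have hNcast : ((N : ℕ) : ℤ) = (p : ℤ) ^ (k - 1) := by rw [hNdef]; push_cast; ring
  have hcomp2 : ∀ w : Zsqrtd ε, ((p : ℤ) ^ (k - 1) ∣ w.re) → ((p : ℤ) ^ (k - 1) ∣ w.im) →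
      (p : Zsqrtd ε) ^ k ∣ (p : Zsqrtd ε) * w := by
    intro w h1 h2
    have h3 := zsqrtd_mul_dvd ε p (k - 1) w h1 h2
    rwa [hkk] at h3
  have hcancel2 : ∀ w : Zsqrtd ε, (p : Zsqrtd ε) ^ k ∣ (p : Zsqrtd ε) * w →
      ((p : ℤ) ^ (k - 1) ∣ w.re ∧ (p : ℤ) ^ (k - 1) ∣ w.im) := by
    intro w hw
    rw [← hkk] at hw
    exact zsqrtd_cancel ε hp.pos (k - 1) w hw
  have ecard : (ZMod N × ZMod N) ≃ ↥(unitsOneModP ε p k hk) := by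
    refine Equiv.ofBijective
      (fun c => ⟨Uof ⟨(c.1.val : ℤ), (c.2.val : ℤ)⟩, hUofB _⟩) ⟨?_, ?_⟩
    · intro c c' hcc
      have h0 : Uof ⟨(c.1.val : ℤ), (c.2.val : ℤ)⟩ = Uof ⟨(c'.1.val : ℤ), (c'.2.val : ℤ)⟩ :=
        congrArg Subtype.val hcc
      have h1 : Ideal.Quotient.mk (Ideal.span {(p : Zsqrtd ε) ^ k})
            (1 + (p : Zsqrtd ε) * ⟨(c.1.val : ℤ), (c.2.val : ℤ)⟩)
          = Ideal.Quotient.mk (Ideal.span {(p : Zsqrtd ε) ^ k})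
            (1 + (p : Zsqrtd ε) * ⟨(c'.1.val : ℤ), (c'.2.val : ℤ)⟩) := by
        rw [← hUof, ← hUof, h0]
      rw [hmk_eq] at h1
      have h2 : (p : Zsqrtd ε) ^ k ∣ (p : Zsqrtd ε)
          * ((⟨(c.1.val : ℤ), (c.2.val : ℤ)⟩ : Zsqrtd ε) - ⟨(c'.1.val : ℤ), (c'.2.val : ℤ)⟩) := by
        have heq : (1 + (p : Zsqrtd ε) * ⟨(c.1.val : ℤ), (c.2.val : ℤ)⟩)
            - (1 + (p : Zsqrtd ε) * ⟨(c'.1.val : ℤ), (c'.2.val : ℤ)⟩)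
            = (p : Zsqrtd ε)
              * ((⟨(c.1.val : ℤ), (c.2.val : ℤ)⟩ : Zsqrtd ε)
                - ⟨(c'.1.val : ℤ), (c'.2.val : ℤ)⟩) := by ring
        rwa [heq] at h1
      obtain ⟨hre, him⟩ := hcancel2 _ h2
      rw [Zsqrtd.re_sub] at hre
      rw [Zsqrtd.im_sub] at him
      have hcz : ∀ u u' : ZMod N, ((p : ℤ) ^ (k - 1) ∣ (u.val : ℤ) - (u'.val : ℤ)) → u = u' := by
        intro u u' hd
        have h3 : (((u.val : ℤ) - (u'.val : ℤ) : ℤ) : ZMod N) = 0 := by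
          rw [ZMod.intCast_zmod_eq_zero_iff_dvd, hNcast]
          exact hd
        push_cast at h3
        rw [hval, hval] at h3
        exact sub_eq_zero.mp h3
      exact Prod.ext (hcz _ _ hre) (hcz _ _ him)
    · intro b
      obtain ⟨X, hX⟩ := Ideal.Quotient.mk_surjective
        (((b : (Zsqrtd ε ⧸ Ideal.span {(p : Zsqrtd ε) ^ k})ˣ)) :
          Zsqrtd ε ⧸ Ideal.span {(p : Zsqrtd ε) ^ k})
      have hb1 := (hmem _).mp b.2
      rw [← hX, hred1] at hb1
      obtain ⟨Y, hY⟩ := hb1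
      refine ⟨((Y.re : ZMod N), (Y.im : ZMod N)), ?_⟩
      apply Subtype.ext
      apply Units.ext
      show ((Uof _ : (Zsqrtd ε ⧸ Ideal.span {(p : Zsqrtd ε) ^ k})ˣ) :
        Zsqrtd ε ⧸ Ideal.span {(p : Zsqrtd ε) ^ k}) = _
      rw [hUof, ← hX, hmk_eq]
      have hXe : X = 1 + (p : Zsqrtd ε) * Y := by
        rw [sub_eq_iff_eq_add] at hY
        rw [hY]; ring
      rw [hXe]
      have heq : (1 + (p : Zsqrtd ε)
            * (⟨(((Y.re : ZMod N)).val : ℤ), (((Y.im : ZMod N)).val : ℤ)⟩ : Zsqrtd ε))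
          - (1 + (p : Zsqrtd ε) * Y)
          = (p : Zsqrtd ε)
            * ((⟨(((Y.re : ZMod N)).val : ℤ), (((Y.im : ZMod N)).val : ℤ)⟩ : Zsqrtd ε) - Y) := by
        ring
      rw [heq]
      apply hcomp2
      · rw [Zsqrtd.re_sub]
        have h0 : ((((((Y.re : ZMod N)).val : ℤ) - Y.re) : ℤ) : ZMod N) = 0 := by
          push_cast
          rw [hval]
          exact sub_self _
        have h3 := (ZMod.intCast_zmod_eq_zero_iff_dvd _ _).mp h0
        rwa [hNcast] at h3
      · rw [Zsqrtd.im_sub]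
        have h0 : ((((((Y.im : ZMod N)).val : ℤ) - Y.im) : ℤ) : ZMod N) = 0 := by
          push_cast
          rw [hval]
          exact sub_self _
        have h3 := (ZMod.intCast_zmod_eq_zero_iff_dvd _ _).mp h0
        rwa [hNcast] at h3
  haveI : Finite ↥(unitsOneModP ε p k hk) := Finite.of_equiv _ ecard
  have hcardB : Nat.card ↥(unitsOneModP ε p k hk) = N * N := by
    rw [← Nat.card_congr ecard, Nat.card_prod, Nat.card_zmod]
  have hcardD : Nat.card (Multiplicative (ZMod N) × Multiplicative (ZMod N)) = N * N := by
    rw [Nat.card_prod, Nat.card_congr (Multiplicative.toAdd), Nat.card_zmod]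
  have hbij : Function.Bijective φ :=
    (Nat.bijective_iff_injective_and_card φ).mpr ⟨hinj, by rw [hcardD, hcardB]⟩
  refine ⟨⟨(MulEquiv.ofBijective φ hbij).symm⟩, ?_, ?_⟩
  · rw [hcardB, hNdef, ← pow_add, show k - 1 + (k - 1) = 2 * k - 2 by omega]
  · intro hk2
    set e := MulEquiv.ofBijective φ hbij with hedef
    have E1 : {y : Multiplicative (ZMod N) × Multiplicative (ZMod N) | orderOf y = p ^ (k - 1)}
        ≃ {x : ↥(unitsOneModP ε p k hk) | orderOf x = p ^ (k - 1)} :=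
      Equiv.subtypeEquiv e.toEquiv (fun y => by
        have h5 : orderOf (e.toEquiv y) = orderOf y :=
          orderOf_injective e.toMonoidHom e.injective y
        simp only [Set.mem_setOf_eq, h5])
    rw [Nat.card_congr E1.symm, hNdef, show k - 1 = (k - 2) + 1 by omega, count_ord hp (k - 2),
      ← pow_add, ← pow_add, show k - 2 + 1 + (k - 2 + 1) = 2 * k - 2 by omega,
      show k - 2 + (k - 2) = 2 * k - 4 by omega]
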